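/- For every p ∈ (1,∞) there exists a constant C > 0 such that for all a, b ∈ ℝ with (a,b) ≠ (0,0) and every λ ∈ [0,2]: 0 ≤ |b|^p − |a|^p − p a^⟨p−1⟩ (b−a) ≤ C |b−a|^λ (|b|+|a|)^{p−λ}. -/
import Mathlib


open MeasureTheory Real Filter Topology
open scoped ENNReal NNReal

noncomputable section

/-- The signed power `a^⟨k⟩ := |a|^k sgn a` (with `0^k := 0`). -/
def sgnPow (a k : ℝ) : ℝ := |a| ^ k * Real.sign a

/-- The Bregman divergence `F_p(a,b) := |b|^p - |a|^p - p a^⟨p-1⟩ (b-a)`. -/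
def bregmanF (p a b : ℝ) : ℝ := |b| ^ p - |a| ^ p - p * sgnPow a (p - 1) * (b - a)

/-- The constant `A_{d,-α} = 2^α Γ((d+α)/2) π^{-d/2} / |Γ(-α/2)|`. -/
def coefA (d : ℕ) (α : ℝ) : ℝ :=
  2 ^ α * Real.Gamma (((d : ℝ) + α) / 2) * Real.pi ^ (-(d : ℝ) / 2) / |Real.Gamma (-α / 2)|

/-- The kernel `ν(x,y) = A_{d,-α} |x-y|^{-d-α}` of the fractional Laplacian. -/
def nuK (d : ℕ) (α : ℝ) (x y : EuclideanSpace ℝ (Fin d)) : ℝ :=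
  coefA d α * ‖x - y‖ ^ (-(d : ℝ) - α)

/-- The Hardy constant `κ_β`.  Note that `Real.Gamma 0 = 0` and division by `0` is `0`
in Lean, so this formula automatically gives `κ_0 = 0` and `κ_{d-α} = 0`. -/
def kappaC (d : ℕ) (α β : ℝ) : ℝ :=
  2 ^ α * Real.Gamma ((β + α) / 2) * Real.Gamma (((d : ℝ) - β) / 2) /
    (Real.Gamma (β / 2) * Real.Gamma (((d : ℝ) - β - α) / 2))

/-- The Sobolev–Bregman form `E_p[u]`, an element of `[0,∞]`
(the integrand is nonnegative). -/
def formEp (d : ℕ) (α p : ℝ) (u : EuclideanSpace ℝ (Fin d) → ℝ) : ℝ≥0∞ :=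
  (1 / 2) * ∫⁻ x, ∫⁻ y, ENNReal.ofReal
    ((u x - u y) * (sgnPow (u x) (p - 1) - sgnPow (u y) (p - 1)) * nuK d α x y)

/-- The Hardy integral `∫ |u(x)|^p |x|^{-α} dx`, an element of `[0,∞]`. -/
def hardyI (d : ℕ) (α p : ℝ) (u : EuclideanSpace ℝ (Fin d) → ℝ) : ℝ≥0∞ :=
  ∫⁻ x, ENNReal.ofReal (|u x| ^ p * ‖x‖ ^ (-α))

end

section Aux
variable {p q a b s t : ℝ}
lemma sgnPow_zero'' (k : ℝ) : sgnPow 0 k = 0 := by simp [sgnPow, Real.sign_zero]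
lemma sgnPow_of_pos (h : 0 < a) (k : ℝ) : sgnPow a k = a ^ k := by
  simp [sgnPow, Real.sign_of_pos h, abs_of_pos h]
lemma sgnPow_of_nonneg (h : 0 ≤ a) {k : ℝ} (hk : k ≠ 0) : sgnPow a k = a ^ k := by
  rcases eq_or_lt_of_le h with rfl | h
  · simp [sgnPow_zero'', Real.zero_rpow hk]
  · exact sgnPow_of_pos h k
lemma sgnPow_neg'' (a k : ℝ) : sgnPow (-a) k = - sgnPow a k := by
  simp [sgnPow, Real.sign_neg, abs_neg, mul_neg]
lemma bregmanF_neg (p a b : ℝ) : bregmanF p (-a) (-b) = bregmanF p a b := by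
  simp only [bregmanF, sgnPow_neg'', abs_neg]; ring

lemma gap_conv (hq : 1 ≤ q) (ht : 0 ≤ t) (hts : t ≤ s) :
    s ^ q - t ^ q ≤ q * s ^ (q - 1) * (s - t) := by
  have hs : 0 ≤ s := ht.trans hts
  rcases eq_or_lt_of_le hs with rfl | hs
  · have h0 : t = 0 := le_antisymm hts ht
    subst h0
    simp [Real.zero_rpow (by linarith : q ≠ 0)]
  · have hx : -1 ≤ t / s - 1 := by
      have : 0 ≤ t / s := div_nonneg ht hs.le
      linarith
    have key : 1 + q * (t / s - 1) ≤ (1 + (t / s - 1)) ^ q :=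
      one_add_mul_self_le_rpow_one_add hx hq
    have h1 : 1 + (t / s - 1) = t / s := by ring
    rw [h1, Real.div_rpow ht hs.le] at key
    have hsq : 0 < s ^ q := Real.rpow_pos_of_pos hs q
    have hs1 : s ^ (q - 1) = s ^ q / s := Real.rpow_sub_one hs.ne' q
    have key2 := mul_le_mul_of_nonneg_left key hsq.le
    have e1 : s ^ q * (t ^ q / s ^ q) = t ^ q := by field_simp
    have e2 : s ^ q * (1 + q * (t / s - 1)) = s ^ q + q * (s ^ q / s) * t - q * s ^ q := by
      field_simp; ring
    rw [e1, e2] at key2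
    rw [hs1]
    have e3 : q * (s ^ q / s) * (s - t) = q * (s ^ q / s) * s - q * (s ^ q / s) * t := by ring
    have e4 : q * (s ^ q / s) * s = q * s ^ q := by field_simp
    rw [e3, e4]
    linarith

lemma gap_conc (hq0 : 0 < q) (hq : q ≤ 1) (ht : 0 < t) (hts : t ≤ s) :
    s ^ q - t ^ q ≤ q * t ^ (q - 1) * (s - t) := by
  have hx : -1 ≤ s / t - 1 := by
    have : 0 ≤ s / t := div_nonneg (ht.le.trans hts) ht.le
    linarith
  have key : (1 + (s / t - 1)) ^ q ≤ 1 + q * (s / t - 1) :=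
    rpow_one_add_le_one_add_mul_self hx hq0.le hq
  have h1 : 1 + (s / t - 1) = s / t := by ring
  rw [h1, Real.div_rpow (ht.le.trans hts) ht.le] at key
  have htq : 0 < t ^ q := Real.rpow_pos_of_pos ht q
  have ht1 : t ^ (q - 1) = t ^ q / t := Real.rpow_sub_one ht.ne' q
  have key2 := mul_le_mul_of_nonneg_left key htq.le
  have e1 : t ^ q * (s ^ q / t ^ q) = s ^ q := by field_simp
  have e2 : t ^ q * (1 + q * (s / t - 1)) = t ^ q + q * (t ^ q / t) * s - q * t ^ q := by
    field_simp; ring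
  rw [e1, e2] at key2
  rw [ht1]
  have e3 : q * (t ^ q / t) * (s - t) = q * (t ^ q / t) * s - q * (t ^ q / t) * t := by ring
  have e4 : q * (t ^ q / t) * t = q * t ^ q := by field_simp
  rw [e3, e4]
  linarith

lemma gap_subadd (hq0 : 0 < q) (hq : q ≤ 1) (ht : 0 ≤ t) (hts : t ≤ s) :
    s ^ q - t ^ q ≤ (s - t) ^ q := by
  have h1 : 0 ≤ s - t := by linarith
  have key := NNReal.rpow_add_le_add_rpow (Real.toNNReal (s - t)) (Real.toNNReal t) hq0.le hq
  have key2 : (((Real.toNNReal (s - t) + Real.toNNReal t) ^ q : ℝ≥0) : ℝ) ≤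
      (((Real.toNNReal (s - t)) ^ q + (Real.toNNReal t) ^ q : ℝ≥0) : ℝ) := by
    exact_mod_cast key
  rw [NNReal.coe_rpow, NNReal.coe_add, NNReal.coe_add, NNReal.coe_rpow, NNReal.coe_rpow,
    Real.coe_toNNReal _ h1, Real.coe_toNNReal _ ht] at key2
  have e : s - t + t = s := by ring
  rw [e] at key2
  linarith

lemma superadd (hq : 1 ≤ q) (hs : 0 ≤ s) (ht : 0 ≤ t) :
    s ^ q + t ^ q ≤ (s + t) ^ q := by
  have key := NNReal.add_rpow_le_rpow_add (Real.toNNReal s) (Real.toNNReal t) hq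
  have key2 : (((Real.toNNReal s) ^ q + (Real.toNNReal t) ^ q : ℝ≥0) : ℝ) ≤
      (((Real.toNNReal s + Real.toNNReal t) ^ q : ℝ≥0) : ℝ) := by exact_mod_cast key
  rw [NNReal.coe_rpow, NNReal.coe_add, NNReal.coe_add, NNReal.coe_rpow, NNReal.coe_rpow,
    Real.coe_toNNReal _ hs, Real.coe_toNNReal _ ht] at key2
  linarith

lemma bregmanF_nonneg (hp : 1 < p) (a b : ℝ) : 0 ≤ bregmanF p a b := by
  have main : ∀ a b : ℝ, 0 ≤ a → 0 ≤ bregmanF p a b := by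
    intro a b ha
    rcases eq_or_lt_of_le ha with rfl | ha
    · simp [bregmanF, sgnPow_zero'', abs_zero, Real.zero_rpow (by linarith : p ≠ 0)]
      positivity
    · rw [bregmanF, sgnPow_of_pos ha, abs_of_pos ha]
      have hap : 0 < a ^ p := Real.rpow_pos_of_pos ha p
      have haq : 0 < a ^ (p - 1) := Real.rpow_pos_of_pos ha (p - 1)
      have haqa : a ^ (p - 1) * a = a ^ p := by
        rw [← Real.rpow_add_one ha.ne' (p - 1)]; ring_nf
      rcases le_or_gt b 0 with hb | hb
      · have h1 : 0 ≤ |b| ^ p := Real.rpow_nonneg (abs_nonneg b) p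
        nlinarith [mul_nonneg haq.le (neg_nonneg.2 hb)]
      · rw [abs_of_pos hb]
        have hx : -1 ≤ b / a - 1 := by
          have : 0 ≤ b / a := div_nonneg hb.le ha.le
          linarith
        have key : 1 + p * (b / a - 1) ≤ (1 + (b / a - 1)) ^ p :=
          one_add_mul_self_le_rpow_one_add hx hp.le
        have h1 : 1 + (b / a - 1) = b / a := by ring
        rw [h1, Real.div_rpow hb.le ha.le] at key
        have key2 := mul_le_mul_of_nonneg_left key hap.le
        have e1 : a ^ p * (b ^ p / a ^ p) = b ^ p := by field_simp
        have e2 : a ^ p * (1 + p * (b / a - 1)) = a ^ p + p * (a ^ p / a) * b - p * a ^ p := by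
          field_simp; ring
        rw [e1, e2] at key2
        have e3 : a ^ p / a = a ^ (p - 1) := (Real.rpow_sub_one ha.ne' p).symm
        rw [e3] at key2
        nlinarith
  rcases le_or_gt 0 a with ha | ha
  · exact main a b ha
  · rw [← bregmanF_neg]
    exact main (-a) (-b) (by linarith)

lemma bregmanF_le_sym (hp : 1 < p) (a b : ℝ) :
    bregmanF p a b ≤ p * (b - a) * (sgnPow b (p - 1) - sgnPow a (p - 1)) := by
  have h := bregmanF_nonneg hp b a
  have key : bregmanF p a b + bregmanF p b a
      = p * (b - a) * (sgnPow b (p - 1) - sgnPow a (p - 1)) := by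
    simp only [bregmanF]; ring
  linarith

lemma delta_conv (hq : 1 ≤ q) (hab : a ≤ b) :
    sgnPow b q - sgnPow a q ≤ q * (|b| + |a|) ^ (q - 1) * (b - a) := by
  have hq0 : (0:ℝ) < q := by linarith
  have main : ∀ a b : ℝ, 0 ≤ a → a ≤ b →
      sgnPow b q - sgnPow a q ≤ q * (|b| + |a|) ^ (q - 1) * (b - a) := by
    intro a b ha hab
    have hb : 0 ≤ b := ha.trans hab
    rw [sgnPow_of_nonneg ha hq0.ne', sgnPow_of_nonneg hb hq0.ne']
    have h1 := gap_conv hq ha hab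
    have hbS : b ≤ |b| + |a| := by
      rw [abs_of_nonneg hb, abs_of_nonneg ha]; linarith
    have h2 : b ^ (q - 1) ≤ (|b| + |a|) ^ (q - 1) :=
      Real.rpow_le_rpow hb hbS (by linarith)
    have h3 : q * b ^ (q - 1) * (b - a) ≤ q * (|b| + |a|) ^ (q - 1) * (b - a) := by
      have := mul_le_mul_of_nonneg_right (mul_le_mul_of_nonneg_left h2 hq0.le)
        (sub_nonneg.2 hab)
      linarith
    linarith
  rcases le_or_gt 0 a with ha | ha
  · exact main a b ha hab
  rcases lt_or_ge 0 b with hb | hb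
  · -- a < 0 < b
    rw [sgnPow_of_pos hb]
    have hna : sgnPow a q = -((-a) ^ q) := by
      rw [show a = -(-a) by ring, sgnPow_neg'', sgnPow_of_pos (by linarith : (0:ℝ) < -a)]
      ring_nf
    rw [hna]
    have hs : b - a = |b| + |a| := by rw [abs_of_pos hb, abs_of_neg ha]; ring
    have h1 : b ^ q + (-a) ^ q ≤ (b + -a) ^ q := superadd hq hb.le (by linarith)
    have e : b + -a = b - a := by ring
    rw [e] at h1
    have hD : (0:ℝ) < b - a := by linarith
    have h2 : (b - a) ^ q = (b - a) ^ (q - 1) * (b - a) := by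
      rw [← Real.rpow_add_one hD.ne' (q - 1)]; ring_nf
    have h3 : (b - a) ^ (q - 1) * (b - a) ≤ q * (b - a) ^ (q - 1) * (b - a) := by
      have h4 : 0 ≤ (b - a) ^ (q - 1) := Real.rpow_nonneg hD.le _
      nlinarith [mul_nonneg h4 hD.le]
    rw [← hs]
    linarith [h1, h2 ▸ h1]
  · -- b ≤ 0
    have := main (-b) (-a) (by linarith) (by linarith)
    rw [sgnPow_neg'', sgnPow_neg'', abs_neg, abs_neg] at this
    have e : |a| + |b| = |b| + |a| := add_comm _ _
    rw [e] at this
    linarith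

lemma delta_holder (hq0 : 0 < q) (hq : q ≤ 1) (hab : a ≤ b) :
    sgnPow b q - sgnPow a q ≤ 2 * (b - a) ^ q := by
  have main : ∀ a b : ℝ, 0 ≤ a → a ≤ b →
      sgnPow b q - sgnPow a q ≤ 2 * (b - a) ^ q := by
    intro a b ha hab
    have hb : 0 ≤ b := ha.trans hab
    rw [sgnPow_of_nonneg ha hq0.ne', sgnPow_of_nonneg hb hq0.ne']
    have h1 := gap_subadd hq0 hq ha hab
    have h2 : 0 ≤ (b - a) ^ q := Real.rpow_nonneg (by linarith) q
    linarith
  rcases le_or_gt 0 a with ha | ha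
  · exact main a b ha hab
  rcases lt_or_ge 0 b with hb | hb
  · rw [sgnPow_of_pos hb]
    have hna : sgnPow a q = -((-a) ^ q) := by
      rw [show a = -(-a) by ring, sgnPow_neg'', sgnPow_of_pos (by linarith : (0:ℝ) < -a)]
      ring_nf
    rw [hna]
    have h1 : b ^ q ≤ (b - a) ^ q := Real.rpow_le_rpow hb.le (by linarith) hq0.le
    have h2 : (-a) ^ q ≤ (b - a) ^ q := Real.rpow_le_rpow (by linarith) (by linarith) hq0.le
    linarith
  · have := main (-b) (-a) (by linarith) (by linarith)
    rw [sgnPow_neg'', sgnPow_neg''] at this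
    have e : -a - -b = b - a := by ring
    rw [e] at this
    linarith

lemma delta_conc (hq0 : 0 < q) (hq : q ≤ 1) (ha : 0 < a) (hab : a ≤ b) :
    sgnPow b q - sgnPow a q ≤ q * a ^ (q - 1) * (b - a) := by
  rw [sgnPow_of_pos ha, sgnPow_of_pos (lt_of_lt_of_le ha hab)]
  exact gap_conc hq0 hq ha hab

end Aux
section Aux2
variable {p a b : ℝ}

lemma bregmanF_quad_le (hp : 1 < p) (hab : a ≤ b) (hS : 0 < |b| + |a|) :
    bregmanF p a b ≤ ((p * (p - 1) + 2 * p) * (4:ℝ) ^ (2 - p) + p * (p - 1)) *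
      ((b - a) * (b - a)) * (|b| + |a|) ^ (p - 2) := by
  have hq0 : (0:ℝ) < p - 1 := by linarith
  have hD0 : (0:ℝ) ≤ b - a := by linarith
  have h4 : (0:ℝ) < (4:ℝ) ^ (2 - p) := Real.rpow_pos_of_pos (by norm_num) _
  have hSp : (0:ℝ) ≤ (|b| + |a|) ^ (p - 2) := Real.rpow_nonneg hS.le _
  have hX : (0:ℝ) ≤ (b - a) * (b - a) * (|b| + |a|) ^ (p - 2) := by positivity
  have hFsym := bregmanF_le_sym hp a b
  have finish : ∀ K : ℝ,
      bregmanF p a b ≤ K * ((b - a) * (b - a)) * (|b| + |a|) ^ (p - 2) →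
      K ≤ (p * (p - 1) + 2 * p) * (4:ℝ) ^ (2 - p) + p * (p - 1) →
      bregmanF p a b ≤ ((p * (p - 1) + 2 * p) * (4:ℝ) ^ (2 - p) + p * (p - 1)) *
        ((b - a) * (b - a)) * (|b| + |a|) ^ (p - 2) := by
    intro K h1 h2
    calc bregmanF p a b ≤ K * ((b - a) * (b - a)) * (|b| + |a|) ^ (p - 2) := h1
      _ = K * ((b - a) * (b - a) * (|b| + |a|) ^ (p - 2)) := by ring
      _ ≤ ((p * (p - 1) + 2 * p) * (4:ℝ) ^ (2 - p) + p * (p - 1)) *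
          ((b - a) * (b - a) * (|b| + |a|) ^ (p - 2)) := mul_le_mul_of_nonneg_right h2 hX
      _ = _ := by ring
  have h44 : ((|b| + |a|) / 4) ^ (p - 2) = (4:ℝ) ^ (2 - p) * (|b| + |a|) ^ (p - 2) := by
    rw [div_eq_mul_inv, Real.mul_rpow hS.le (by norm_num),
      Real.inv_rpow (by norm_num : (0:ℝ) ≤ 4),
      ← Real.rpow_neg (by norm_num : (0:ℝ) ≤ 4), show -(p - 2) = 2 - p by ring, mul_comm]
  rcases le_or_gt 2 p with hp2 | hp2
  · -- p ≥ 2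
    have hd := delta_conv (q := p - 1) (by linarith) hab
    rw [show p - 1 - 1 = p - 2 by ring] at hd
    apply finish (p * (p - 1))
    · have h1 : bregmanF p a b ≤ p * (b - a) * ((p - 1) * (|b| + |a|) ^ (p - 2) * (b - a)) :=
        hFsym.trans (mul_le_mul_of_nonneg_left hd (by positivity))
      calc bregmanF p a b ≤ _ := h1
        _ = p * (p - 1) * ((b - a) * (b - a)) * (|b| + |a|) ^ (p - 2) := by ring
    · nlinarith [mul_pos (show (0:ℝ) < p * (p - 1) + 2 * p by nlinarith) h4]
  · have hq1 : p - 1 ≤ 1 := by linarith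
    rcases le_or_gt (b - a) ((|b| + |a|) / 4) with hsm | hbig
    · -- small gap: equal signs
      have key : ∃ m : ℝ, (|b| + |a|) / 4 ≤ m ∧ 0 < m ∧
          sgnPow b (p - 1) - sgnPow a (p - 1) ≤ (p - 1) * m ^ (p - 2) * (b - a) := by
        have hsign : 0 < a ∨ b < 0 := by
          by_contra h
          push_neg at h
          obtain ⟨h1, h2⟩ := h
          have e : b - a = |b| + |a| := by rw [abs_of_nonneg h2, abs_of_nonpos h1]; ring
          linarith
        rcases hsign with ha | hb
        · have hb : 0 < b := lt_of_lt_of_le ha hab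
          have hSe : |b| + |a| = b + a := by rw [abs_of_pos hb, abs_of_pos ha]
          have hd := delta_conc (q := p - 1) hq0 hq1 ha hab
          rw [show p - 1 - 1 = p - 2 by ring] at hd
          exact ⟨a, by rw [hSe]; linarith [hsm, hSe ▸ hsm], ha, hd⟩
        · have ha : a < 0 := lt_of_le_of_lt hab hb
          have hSe : |b| + |a| = -b + -a := by rw [abs_of_neg hb, abs_of_neg ha]
          have hd := delta_conc (q := p - 1) hq0 hq1 (show (0:ℝ) < -b by linarith)
            (show -b ≤ -a by linarith)
          rw [sgnPow_neg'', sgnPow_neg'', show -a - -b = b - a by ring,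
            show p - 1 - 1 = p - 2 by ring] at hd
          refine ⟨-b, ?_, by linarith, by linarith⟩
          rw [hSe] at hsm ⊢
          linarith
      obtain ⟨m, hm1, hm2, hd⟩ := key
      have hmono : m ^ (p - 2) ≤ ((|b| + |a|) / 4) ^ (p - 2) :=
        Real.rpow_le_rpow_of_nonpos (by positivity) hm1 (by linarith)
      rw [h44] at hmono
      have hd2 : (p - 1) * m ^ (p - 2) * (b - a) ≤
          (p - 1) * ((4:ℝ) ^ (2 - p) * (|b| + |a|) ^ (p - 2)) * (b - a) := by
        have := mul_le_mul_of_nonneg_right (mul_le_mul_of_nonneg_left hmono hq0.le) hD0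
        linarith
      apply finish (p * (p - 1) * (4:ℝ) ^ (2 - p))
      · have h1 : bregmanF p a b ≤ p * (b - a) *
            ((p - 1) * ((4:ℝ) ^ (2 - p) * (|b| + |a|) ^ (p - 2)) * (b - a)) :=
          hFsym.trans (mul_le_mul_of_nonneg_left (hd.trans hd2) (by positivity))
        calc bregmanF p a b ≤ _ := h1
          _ = p * (p - 1) * (4:ℝ) ^ (2 - p) * ((b - a) * (b - a)) * (|b| + |a|) ^ (p - 2) := by
            ring
      · nlinarith [h4]
    · -- big gap
      have hD : (0:ℝ) < b - a := lt_trans (by positivity) hbig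
      have hd := delta_holder (q := p - 1) hq0 hq1 hab
      have hsplit : (b - a) ^ (p - 1) = (b - a) ^ (p - 2) * (b - a) := by
        rw [show p - 1 = p - 2 + 1 by ring, Real.rpow_add_one hD.ne']
      have hmono : (b - a) ^ (p - 2) ≤ ((|b| + |a|) / 4) ^ (p - 2) :=
        Real.rpow_le_rpow_of_nonpos (by positivity) hbig.le (by linarith)
      rw [h44] at hmono
      have hd2 : 2 * (b - a) ^ (p - 1) ≤
          2 * ((4:ℝ) ^ (2 - p) * (|b| + |a|) ^ (p - 2)) * (b - a) := by
        rw [hsplit]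
        have := mul_le_mul_of_nonneg_right hmono hD0
        linarith
      apply finish (2 * p * (4:ℝ) ^ (2 - p))
      · have h1 : bregmanF p a b ≤ p * (b - a) *
            (2 * ((4:ℝ) ^ (2 - p) * (|b| + |a|) ^ (p - 2)) * (b - a)) :=
          hFsym.trans (mul_le_mul_of_nonneg_left (hd.trans hd2) (by positivity))
        calc bregmanF p a b ≤ _ := h1
          _ = 2 * p * (4:ℝ) ^ (2 - p) * ((b - a) * (b - a)) * (|b| + |a|) ^ (p - 2) := by ring
      · nlinarith [h4, mul_pos (mul_pos (show (0:ℝ) < p by linarith)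
          (show (0:ℝ) < p - 1 by linarith)) h4]

lemma bregmanF_quad (hp : 1 < p) (a b : ℝ) (hS : 0 < |b| + |a|) :
    bregmanF p a b ≤ ((p * (p - 1) + 2 * p) * (4:ℝ) ^ (2 - p) + p * (p - 1)) *
      |b - a| ^ (2:ℝ) * (|b| + |a|) ^ (p - 2) := by
  have habs : |b - a| ^ (2:ℝ) = |b - a| * |b - a| := by
    rw [show (2:ℝ) = ((2:ℕ):ℝ) by norm_num, Real.rpow_natCast]; ring
  rcases le_total a b with h | h
  · rw [habs, abs_of_nonneg (sub_nonneg.2 h)]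
    exact bregmanF_quad_le hp h hS
  · rw [habs, abs_of_nonpos (sub_nonpos.2 h), ← bregmanF_neg]
    have hS' : 0 < |(-b)| + |(-a)| := by rw [abs_neg, abs_neg]; exact hS
    have := bregmanF_quad_le hp (show -a ≤ -b by linarith) hS'
    rw [abs_neg, abs_neg] at this
    calc bregmanF p (-a) (-b) ≤ _ := this
      _ = _ := by ring

lemma bregmanF_lin (hp : 1 < p) (a b : ℝ) (hS : 0 < |b| + |a|) :
    bregmanF p a b ≤ (1 + p) * (|b| + |a|) ^ p := by
  have h1 : |b| ^ p ≤ (|b| + |a|) ^ p :=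
    Real.rpow_le_rpow (abs_nonneg b) (by linarith [abs_nonneg a]) (by linarith)
  have h2 : 0 ≤ |a| ^ p := Real.rpow_nonneg (abs_nonneg a) p
  have hsgn : |Real.sign a| ≤ 1 := by
    rcases Real.sign_apply_eq a with h | h | h <;> rw [h] <;> norm_num
  have h3 : |sgnPow a (p - 1)| ≤ |a| ^ (p - 1) := by
    calc |sgnPow a (p - 1)| = |a| ^ (p - 1) * |Real.sign a| := by
          rw [sgnPow, abs_mul, abs_of_nonneg (Real.rpow_nonneg (abs_nonneg a) _)]
      _ ≤ |a| ^ (p - 1) * 1 :=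
          mul_le_mul_of_nonneg_left hsgn (Real.rpow_nonneg (abs_nonneg a) _)
      _ = |a| ^ (p - 1) := by ring
  have h4 : |a| ^ (p - 1) ≤ (|b| + |a|) ^ (p - 1) :=
    Real.rpow_le_rpow (abs_nonneg a) (by linarith [abs_nonneg b]) (by linarith)
  have h5 : |b - a| ≤ |b| + |a| := by
    have := abs_add_le b (-a); simpa [sub_eq_add_neg] using this
  have h6 : (|b| + |a|) ^ (p - 1) * (|b| + |a|) = (|b| + |a|) ^ p := by
    rw [← Real.rpow_add_one hS.ne' (p - 1), show p - 1 + 1 = p by ring]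
  have t1 : |sgnPow a (p - 1)| * |b - a| ≤ (|b| + |a|) ^ (p - 1) * (|b| + |a|) :=
    mul_le_mul (h3.trans h4) h5 (abs_nonneg _) (Real.rpow_nonneg hS.le _)
  have t2 : -(sgnPow a (p - 1) * (b - a)) ≤ |sgnPow a (p - 1)| * |b - a| := by
    rw [← abs_mul]; exact neg_le_abs _
  have t3 := mul_le_mul_of_nonneg_left (t2.trans t1) (show (0:ℝ) ≤ p by linarith)
  have e : p * -(sgnPow a (p - 1) * (b - a)) = -(p * sgnPow a (p - 1) * (b - a)) := by ring
  rw [e, h6] at t3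
  simp only [bregmanF]
  linarith

end Aux2


/-- Upper bound for the Bregman divergence with exponent `λ ∈ [0,2]`. -/
theorem bregman_upper_bound (p : ℝ) (hp : 1 < p) :
    ∃ C : ℝ, 0 < C ∧ ∀ a b lam : ℝ, ¬(a = 0 ∧ b = 0) → lam ∈ Set.Icc (0 : ℝ) 2 →
      0 ≤ bregmanF p a b ∧
      bregmanF p a b ≤ C * |b - a| ^ lam * (|b| + |a|) ^ (p - lam) := by

  set C2 : ℝ := (p * (p - 1) + 2 * p) * (4:ℝ) ^ (2 - p) + p * (p - 1) with hC2def
  set C0 : ℝ := 1 + p with hC0def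
  set M : ℝ := max (max C2 C0) 1 with hMdef
  have hM1 : (1:ℝ) ≤ M := le_max_right _ _
  have hM0 : (0:ℝ) ≤ M := by linarith
  have hC2pos : 0 < C2 := by
    have h4 : (0:ℝ) < (4:ℝ) ^ (2 - p) := Real.rpow_pos_of_pos (by norm_num) _
    have hA : (0:ℝ) < (p * (p - 1) + 2 * p) * (4:ℝ) ^ (2 - p) :=
      mul_pos (by nlinarith) h4
    have hB : (0:ℝ) < p * (p - 1) := by nlinarith
    rw [hC2def]; linarith
  have hC0pos : 0 < C0 := by rw [hC0def]; linarith
  refine ⟨M * M, by nlinarith, fun a b lam h0 hlam => ?_⟩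
  obtain ⟨hl0, hl2⟩ := hlam
  have hS : 0 < |b| + |a| := by
    by_contra h
    push_neg at h
    exact h0 ⟨abs_eq_zero.1 (le_antisymm (by linarith [abs_nonneg b]) (abs_nonneg a)),
      abs_eq_zero.1 (le_antisymm (by linarith [abs_nonneg a]) (abs_nonneg b))⟩
  have hF0 := bregmanF_nonneg hp a b
  refine ⟨hF0, ?_⟩
  have h2 := bregmanF_quad hp a b hS
  have h0b := bregmanF_lin hp a b hS
  have hDpow : (0:ℝ) ≤ |b - a| ^ lam := Real.rpow_nonneg (abs_nonneg _) _
  have hSpow : (0:ℝ) ≤ (|b| + |a|) ^ (p - lam) := Real.rpow_nonneg hS.le _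
  rcases eq_or_lt_of_le hF0 with hF | hF
  · rw [← hF]
    have : (0:ℝ) ≤ M * M := by nlinarith
    positivity
  · have hD : 0 < |b - a| := by
      rcases eq_or_lt_of_le (abs_nonneg (b - a)) with h | h
      · exfalso
        rw [← h, Real.zero_rpow (by norm_num : (2:ℝ) ≠ 0)] at h2
        simp only [mul_zero, zero_mul] at h2
        linarith
      · exact h
    have hl0' : 0 ≤ lam / 2 := by linarith
    have hl1' : lam / 2 ≤ 1 := by linarith
    have hr0' : 0 ≤ 1 - lam / 2 := by linarith
    have hr1' : 1 - lam / 2 ≤ 1 := by linarith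
    have e0 : bregmanF p a b ^ (lam / 2) * bregmanF p a b ^ (1 - lam / 2) = bregmanF p a b := by
      rw [← Real.rpow_add hF, show lam / 2 + (1 - lam / 2) = (1:ℝ) by ring, Real.rpow_one]
    have b1 : bregmanF p a b ^ (lam / 2) ≤
        (C2 * |b - a| ^ (2:ℝ) * (|b| + |a|) ^ (p - 2)) ^ (lam / 2) :=
      Real.rpow_le_rpow hF0 h2 hl0'
    have b2 : bregmanF p a b ^ (1 - lam / 2) ≤ (C0 * (|b| + |a|) ^ p) ^ (1 - lam / 2) :=
      Real.rpow_le_rpow hF0 h0b hr0'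
    have m1 : (C2 * |b - a| ^ (2:ℝ) * (|b| + |a|) ^ (p - 2)) ^ (lam / 2) =
        C2 ^ (lam / 2) * |b - a| ^ lam * (|b| + |a|) ^ ((p - 2) * (lam / 2)) := by
      rw [Real.mul_rpow (mul_nonneg hC2pos.le (Real.rpow_nonneg (abs_nonneg _) _))
          (Real.rpow_nonneg hS.le _),
        Real.mul_rpow hC2pos.le (Real.rpow_nonneg (abs_nonneg _) _),
        ← Real.rpow_mul (abs_nonneg (b - a)), ← Real.rpow_mul hS.le,
        show (2:ℝ) * (lam / 2) = lam by ring]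
    have m2 : (C0 * (|b| + |a|) ^ p) ^ (1 - lam / 2) =
        C0 ^ (1 - lam / 2) * (|b| + |a|) ^ (p * (1 - lam / 2)) := by
      rw [Real.mul_rpow hC0pos.le (Real.rpow_nonneg hS.le _), ← Real.rpow_mul hS.le]
    have m3 : (|b| + |a|) ^ ((p - 2) * (lam / 2)) * (|b| + |a|) ^ (p * (1 - lam / 2)) =
        (|b| + |a|) ^ (p - lam) := by
      rw [← Real.rpow_add hS]; congr 1; ring
    have t1 : C2 ^ (lam / 2) ≤ M := by
      calc C2 ^ (lam / 2) ≤ M ^ (lam / 2) :=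
            Real.rpow_le_rpow hC2pos.le ((le_max_left C2 C0).trans (le_max_left _ 1)) hl0'
        _ ≤ M ^ (1:ℝ) := Real.rpow_le_rpow_of_exponent_le hM1 hl1'
        _ = M := Real.rpow_one M
    have t2 : C0 ^ (1 - lam / 2) ≤ M := by
      calc C0 ^ (1 - lam / 2) ≤ M ^ (1 - lam / 2) :=
            Real.rpow_le_rpow hC0pos.le ((le_max_right C2 C0).trans (le_max_left _ 1)) hr0'
        _ ≤ M ^ (1:ℝ) := Real.rpow_le_rpow_of_exponent_le hM1 hr1'
        _ = M := Real.rpow_one M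
    have hMM : C2 ^ (lam / 2) * C0 ^ (1 - lam / 2) ≤ M * M :=
      mul_le_mul t1 t2 (Real.rpow_nonneg hC0pos.le _) hM0
    calc bregmanF p a b = bregmanF p a b ^ (lam / 2) * bregmanF p a b ^ (1 - lam / 2) := e0.symm
      _ ≤ (C2 * |b - a| ^ (2:ℝ) * (|b| + |a|) ^ (p - 2)) ^ (lam / 2) *
          (C0 * (|b| + |a|) ^ p) ^ (1 - lam / 2) :=
        mul_le_mul b1 b2 (Real.rpow_nonneg hF0 _)
          (Real.rpow_nonneg (by positivity) _)
      _ = (C2 ^ (lam / 2) * C0 ^ (1 - lam / 2)) * (|b - a| ^ lam * (|b| + |a|) ^ (p - lam)) := by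
        rw [m1, m2, ← m3]; ring
      _ ≤ (M * M) * (|b - a| ^ lam * (|b| + |a|) ^ (p - lam)) :=
        mul_le_mul_of_nonneg_right hMM (by positivity)
      _ = M * M * |b - a| ^ lam * (|b| + |a|) ^ (p - lam) := by ring
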